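/- For every p ∈ (1,2) and every positive integer n, the second derivative of Φ_n satisfies 0 ≤ Φ_n''(s) ≤ 2 p n^{2−p} for all s ∈ ℝ; in particular Φ_n is convex. -/

import Mathlib

/-- The `C²` regularization of `s ↦ |s|^p` from the proof of Lemma 3.2. -/
noncomputable def Phi (p : ℝ) (n : ℕ) (s : ℝ) : ℝ :=
  if 1 / (n : ℝ) < |s| then |s| ^ p
  else p * (p - 2) / (8 * (n : ℝ) ^ p) * ((n : ℝ) ^ 2 * s ^ 2 - 1) ^ 2
      + p / (2 * (n : ℝ) ^ p) * ((n : ℝ) ^ 2 * s ^ 2 - 1) + 1 / (n : ℝ) ^ p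

section Aux

open Set Filter Real

/-- Generic gluing lemma for a function defined piecewise by `|t| ≤ c` vs `c < |t|`. -/
theorem hasDerivAt_pieces {f fi fo di do_ : ℝ → ℝ} {c : ℝ} (hc : 0 < c)
    (heqi : ∀ t, |t| ≤ c → f t = fi t)
    (heqo : ∀ t, c < |t| → f t = fo t)
    (hbd : ∀ t, |t| = c → fi t = fo t)
    (hdi : ∀ t, HasDerivAt fi (di t) t)
    (hdo : ∀ t, t ≠ 0 → HasDerivAt fo (do_ t) t)
    (hdbd : ∀ t, |t| = c → di t = do_ t)
    (s : ℝ) : HasDerivAt f (if c < |s| then do_ s else di s) s := by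
  by_cases h1 : c < |s|
  · rw [if_pos h1]
    have hs0 : s ≠ 0 := by
      intro h; rw [h, abs_zero] at h1; linarith
    refine (hdo s hs0).congr_of_eventuallyEq ?_
    filter_upwards [(isOpen_lt continuous_const continuous_abs).mem_nhds h1] with t ht
    exact heqo t ht
  · rw [if_neg h1]
    push_neg at h1
    rcases lt_or_eq_of_le h1 with h2 | h2
    · refine (hdi s).congr_of_eventuallyEq ?_
      filter_upwards [(isOpen_lt continuous_abs continuous_const).mem_nhds h2] with t ht
      exact heqi t ht.le
    · -- |s| = c
      rcases (abs_eq hc.le).mp h2 with hsc | hsc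
      · rw [hsc]
        have habs : |c| = c := abs_of_pos hc
        have hIic : HasDerivWithinAt f (di c) (Iic c) c := by
          refine ((hdi c).hasDerivWithinAt).congr_of_eventuallyEq ?_ (heqi c habs.le)
          filter_upwards [self_mem_nhdsWithin,
            ((eventually_gt_nhds (show -c < c by linarith)).filter_mono nhdsWithin_le_nhds)]
            with t ht1 ht2
          exact heqi t (abs_le.mpr ⟨ht2.le, ht1⟩)
        have hIci : HasDerivWithinAt f (di c) (Ici c) c := by
          rw [hdbd c habs]
          refine ((hdo c hc.ne').hasDerivWithinAt).congr ?_ ?_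
          · intro t ht
            rcases eq_or_lt_of_le (Set.mem_Ici.mp ht) with h | h
            · rw [← h]; rw [heqi c habs.le]; exact hbd c habs
            · exact heqo t (by rw [abs_of_pos (hc.trans h)]; exact h)
          · rw [heqi c habs.le]; exact hbd c habs
        have := hIic.union hIci
        rw [Iic_union_Ici] at this
        exact this.hasDerivAt Filter.univ_mem
      · rw [hsc]
        have habs : |(-c)| = c := by rw [abs_neg, abs_of_pos hc]
        have hIci : HasDerivWithinAt f (di (-c)) (Ici (-c)) (-c) := by
          refine ((hdi (-c)).hasDerivWithinAt).congr_of_eventuallyEq ?_ (heqi _ habs.le)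
          filter_upwards [self_mem_nhdsWithin,
            ((eventually_lt_nhds (show -c < c by linarith)).filter_mono nhdsWithin_le_nhds)]
            with t ht1 ht2
          exact heqi t (abs_le.mpr ⟨ht1, ht2.le⟩)
        have hIic : HasDerivWithinAt f (di (-c)) (Iic (-c)) (-c) := by
          rw [hdbd _ habs]
          have hne : (-c : ℝ) ≠ 0 := by simp [hc.ne']
          refine ((hdo (-c) hne).hasDerivWithinAt).congr ?_ ?_
          · intro t ht
            rcases eq_or_lt_of_le (Set.mem_Iic.mp ht) with h | h
            · rw [h]; rw [heqi _ habs.le]; exact hbd _ habs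
            · refine heqo t ?_
              have : t < 0 := by linarith
              rw [abs_of_neg this]; linarith
          · rw [heqi _ habs.le]; exact hbd _ habs
        have := hIic.union hIci
        rw [Iic_union_Ici] at this
        exact this.hasDerivAt Filter.univ_mem

variable (p : ℝ) (n : ℕ)

/-- Inner polynomial piece. -/
noncomputable def Q (s : ℝ) : ℝ :=
  p * (p - 2) / (8 * (n : ℝ) ^ p) * ((n : ℝ) ^ 2 * s ^ 2 - 1) ^ 2
      + p / (2 * (n : ℝ) ^ p) * ((n : ℝ) ^ 2 * s ^ 2 - 1) + 1 / (n : ℝ) ^ p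

/-- Its derivative. -/
noncomputable def Q1 (s : ℝ) : ℝ :=
  p * (p - 2) / (2 * (n : ℝ) ^ p) * (((n : ℝ) ^ 2 * s ^ 2 - 1) * ((n : ℝ) ^ 2 * s))
      + p / (n : ℝ) ^ p * ((n : ℝ) ^ 2 * s)

/-- Its second derivative. -/
noncomputable def Q2 (s : ℝ) : ℝ :=
  p * (p - 2) / (2 * (n : ℝ) ^ p) * ((n : ℝ) ^ 2 * (3 * (n : ℝ) ^ 2 * s ^ 2 - 1))
      + p / (n : ℝ) ^ p * (n : ℝ) ^ 2

/-- First derivative of Phi. -/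
noncomputable def phi1 (s : ℝ) : ℝ :=
  if 1 / (n : ℝ) < |s| then p * s * |s| ^ (p - 2) else Q1 p n s

/-- Second derivative of Phi. -/
noncomputable def phi2 (s : ℝ) : ℝ :=
  if 1 / (n : ℝ) < |s| then p * (p - 1) * |s| ^ (p - 2) else Q2 p n s

theorem hasDerivAt_Q (s : ℝ) : HasDerivAt (Q p n) (Q1 p n s) s := by
  have hu : HasDerivAt (fun s : ℝ => (n : ℝ) ^ 2 * s ^ 2 - 1) ((n : ℝ) ^ 2 * (2 * s)) s := by
    simpa using ((hasDerivAt_pow 2 s).const_mul ((n : ℝ) ^ 2)).sub_const 1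
  have h := (((hu.pow 2).const_mul (p * (p - 2) / (8 * (n : ℝ) ^ p))).add
    ((hu.const_mul (p / (2 * (n : ℝ) ^ p))).add_const (1 / (n : ℝ) ^ p)))
  convert h using 1
  · rfl
  · rfl
  · funext t; simp only [Q, Pi.add_apply, Pi.pow_apply]; ring
  · simp only [Q1]; ring

theorem hasDerivAt_Q1 (s : ℝ) : HasDerivAt (Q1 p n) (Q2 p n s) s := by
  have hu : HasDerivAt (fun s : ℝ => (n : ℝ) ^ 2 * s ^ 2 - 1) ((n : ℝ) ^ 2 * (2 * s)) s := by
    simpa using ((hasDerivAt_pow 2 s).const_mul ((n : ℝ) ^ 2)).sub_const 1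
  have hv : HasDerivAt (fun s : ℝ => (n : ℝ) ^ 2 * s) ((n : ℝ) ^ 2) s := by
    simpa using (hasDerivAt_id s).const_mul ((n : ℝ) ^ 2)
  have h := (((hu.mul hv).const_mul (p * (p - 2) / (2 * (n : ℝ) ^ p))).add
    (hv.const_mul (p / (n : ℝ) ^ p)))
  convert h using 1
  · rfl
  · rfl
  · rfl
  simp only [Q2]; ring

theorem hasDerivAt_outer0 {s : ℝ} (hs : s ≠ 0) :
    HasDerivAt (fun t : ℝ => |t| ^ p) (p * s * |s| ^ (p - 2)) s := by
  rcases hs.lt_or_gt with h | h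
  · have hpos : (0 : ℝ) < -s := by linarith
    have h1 : HasDerivAt (fun t : ℝ => (-t) ^ p) (p * (-s) ^ (p - 1) * (-1)) s :=
      (Real.hasDerivAt_rpow_const (x := -s) (p := p) (Or.inl hpos.ne')).comp s (hasDerivAt_neg s)
    have h2 : HasDerivAt (fun t : ℝ => |t| ^ p) (p * (-s) ^ (p - 1) * (-1)) s := by
      refine h1.congr_of_eventuallyEq ?_
      filter_upwards [Iio_mem_nhds h] with t ht
      rw [abs_of_neg (Set.mem_Iio.mp ht)]
    convert h2 using 1
    rw [abs_of_neg h, show p - 1 = 1 + (p - 2) by ring, Real.rpow_add hpos, Real.rpow_one]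
    ring
  · have h1 : HasDerivAt (fun t : ℝ => t ^ p) (p * s ^ (p - 1)) s := by
      simpa [mul_comm] using Real.hasDerivAt_rpow_const (x := s) (p := p) (Or.inl h.ne')
    have h2 : HasDerivAt (fun t : ℝ => |t| ^ p) (p * s ^ (p - 1)) s := by
      refine h1.congr_of_eventuallyEq ?_
      filter_upwards [Ioi_mem_nhds h] with t ht
      rw [abs_of_pos (Set.mem_Ioi.mp ht)]
    convert h2 using 1
    rw [abs_of_pos h, show p - 1 = 1 + (p - 2) by ring, Real.rpow_add h, Real.rpow_one]
    ring

theorem hasDerivAt_outer1 {s : ℝ} (hs : s ≠ 0) :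
    HasDerivAt (fun t : ℝ => p * t * |t| ^ (p - 2)) (p * (p - 1) * |s| ^ (p - 2)) s := by
  rcases hs.lt_or_gt with h | h
  · have hpos : (0 : ℝ) < -s := by linarith
    have h1 : HasDerivAt (fun t : ℝ => -(p * (-t) ^ (p - 1)))
        (-(p * ((p - 1) * (-s) ^ (p - 1 - 1) * (-1)))) s :=
      (((Real.hasDerivAt_rpow_const (x := -s) (p := p - 1) (Or.inl hpos.ne')).comp s
        (hasDerivAt_neg s)).const_mul p).neg
    have h2 : HasDerivAt (fun t : ℝ => p * t * |t| ^ (p - 2))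
        (-(p * ((p - 1) * (-s) ^ (p - 1 - 1) * (-1)))) s := by
      refine h1.congr_of_eventuallyEq ?_
      filter_upwards [Iio_mem_nhds h] with t ht
      have ht : t < 0 := Set.mem_Iio.mp ht
      have htpos : (0 : ℝ) < -t := by linarith
      rw [abs_of_neg ht, show p - 1 = 1 + (p - 2) by ring, Real.rpow_add htpos, Real.rpow_one]
      ring
    convert h2 using 1
    rw [abs_of_neg h, show p - 1 - 1 = p - 2 by ring]
    ring
  · have h1 : HasDerivAt (fun t : ℝ => p * t ^ (p - 1)) (p * ((p - 1) * s ^ (p - 1 - 1))) s :=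
      (Real.hasDerivAt_rpow_const (x := s) (p := p - 1) (Or.inl h.ne')).const_mul p
    have h2 : HasDerivAt (fun t : ℝ => p * t * |t| ^ (p - 2))
        (p * ((p - 1) * s ^ (p - 1 - 1))) s := by
      refine h1.congr_of_eventuallyEq ?_
      filter_upwards [Ioi_mem_nhds h] with t ht
      have ht : 0 < t := Set.mem_Ioi.mp ht
      rw [abs_of_pos ht, show p - 1 = 1 + (p - 2) by ring, Real.rpow_add ht, Real.rpow_one]
      ring
    convert h2 using 1
    rw [abs_of_pos h, show p - 1 - 1 = p - 2 by ring]
    ring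

end Aux

theorem stmt_2 (p : ℝ) (hp1 : 1 < p) (hp2 : p < 2) (n : ℕ) (hn : 0 < n) :
    (∀ s : ℝ, 0 ≤ deriv (deriv (Phi p n)) s ∧
      deriv (deriv (Phi p n)) s ≤ 2 * p * (n : ℝ) ^ (2 - p)) ∧
    ConvexOn ℝ Set.univ (Phi p n) := by
  have hN : (0 : ℝ) < (n : ℝ) := Nat.cast_pos.mpr hn
  set N : ℝ := (n : ℝ) with hNdef
  have hc : (0 : ℝ) < 1 / N := by positivity
  have hNp : (0 : ℝ) < N ^ p := Real.rpow_pos_of_pos hN p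
  -- key scalar facts
  have hsq : ∀ t : ℝ, |t| = 1 / N → N ^ 2 * t ^ 2 = 1 := by
    intro t ht
    have : t ^ 2 = (1 / N) ^ 2 := by rw [← sq_abs, ht]
    rw [this]; field_simp
  have hF2 : (1 / N) ^ (p - 2) = N ^ 2 / N ^ p := by
    rw [one_div, ← Real.rpow_neg_one N, ← Real.rpow_natCast N 2,
      ← Real.rpow_mul hN.le, ← Real.rpow_sub hN]
    norm_num
  have hF1 : ((1 : ℝ) / N) ^ p = 1 / N ^ p := by
    rw [one_div, Real.inv_rpow hN.le, one_div]
  -- boundary equalities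
  have hbd0 : ∀ t : ℝ, |t| = 1 / N → Q p n t = |t| ^ p := by
    intro t ht
    rw [Q, hsq t ht, ht, hF1]
    ring_nf
    rfl
  have hdbd0 : ∀ t : ℝ, |t| = 1 / N → Q1 p n t = p * t * |t| ^ (p - 2) := by
    intro t ht
    rw [Q1, hsq t ht, ht, hF2]
    field_simp
    ring
  have hdbd1 : ∀ t : ℝ, |t| = 1 / N → Q2 p n t = p * (p - 1) * |t| ^ (p - 2) := by
    intro t ht
    rw [Q2, show 3 * N ^ 2 * t ^ 2 - 1 = 3 * (N ^ 2 * t ^ 2) - 1 by ring, hsq t ht, ht, hF2]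
    field_simp
    ring
  -- derivative of Phi
  have h1 : ∀ s, HasDerivAt (Phi p n) (phi1 p n s) s := by
    intro s
    have := hasDerivAt_pieces (f := Phi p n) (fi := Q p n) (fo := fun t => |t| ^ p)
      (di := Q1 p n) (do_ := fun t => p * t * |t| ^ (p - 2)) hc
      (fun t ht => by rw [Phi, if_neg (not_lt.mpr ht)]; rfl)
      (fun t ht => by rw [Phi, if_pos ht])
      (fun t ht => hbd0 t ht)
      (hasDerivAt_Q p n)
      (fun t ht => hasDerivAt_outer0 p ht)
      (fun t ht => hdbd0 t ht) s
    simpa [phi1] using this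
  have h2 : ∀ s, HasDerivAt (phi1 p n) (phi2 p n s) s := by
    intro s
    have := hasDerivAt_pieces (f := phi1 p n) (fi := Q1 p n)
      (fo := fun t => p * t * |t| ^ (p - 2))
      (di := Q2 p n) (do_ := fun t => p * (p - 1) * |t| ^ (p - 2)) hc
      (fun t ht => by rw [phi1, if_neg (not_lt.mpr ht)])
      (fun t ht => by rw [phi1, if_pos ht])
      (fun t ht => hdbd0 t ht)
      (hasDerivAt_Q1 p n)
      (fun t ht => hasDerivAt_outer1 p ht)
      (fun t ht => hdbd1 t ht) s
    simpa [phi2] using this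
  have hd1 : deriv (Phi p n) = phi1 p n := funext fun s => (h1 s).deriv
  have hd2 : ∀ s, deriv (deriv (Phi p n)) s = phi2 p n s := by
    intro s; rw [hd1]; exact (h2 s).deriv
  -- bounds on phi2
  have hN2p : N ^ (2 - p) = N ^ 2 / N ^ p := by
    rw [Real.rpow_sub hN, ← Real.rpow_natCast N 2]
    norm_num
  have hbounds : ∀ s : ℝ, 0 ≤ phi2 p n s ∧ phi2 p n s ≤ 2 * p * N ^ (2 - p) := by
    intro s
    rw [phi2]
    by_cases h : 1 / N < |s|
    · rw [if_pos h]
      have habs : (0 : ℝ) ≤ |s| ^ (p - 2) := Real.rpow_nonneg (abs_nonneg s) _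
      have hle : |s| ^ (p - 2) ≤ N ^ (2 - p) := by
        rw [hN2p, ← hF2]
        exact Real.rpow_le_rpow_of_nonpos hc h.le (by linarith)
      constructor
      · exact mul_nonneg (by nlinarith) habs
      · have hy : (0 : ℝ) ≤ N ^ (2 - p) := Real.rpow_nonneg hN.le _
        have h1' : p * (p - 1) * |s| ^ (p - 2) ≤ p * (p - 1) * N ^ (2 - p) :=
          mul_le_mul_of_nonneg_left hle (by nlinarith)
        nlinarith [mul_nonneg (show (0:ℝ) ≤ p * (3 - p) by nlinarith) hy]
    · rw [if_neg h]
      push_neg at h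
      have hQ2 : Q2 p n s = N ^ 2 / N ^ p * (p * (p - 2) * (3 * (N ^ 2 * s ^ 2) - 1) / 2 + p) := by
        rw [Q2]; field_simp; ring
      have ht1 : N ^ 2 * s ^ 2 ≤ 1 := by
        have h' : s ^ 2 ≤ (1 / N) ^ 2 := by
          rw [← sq_abs]
          exact pow_le_pow_left₀ (abs_nonneg s) h 2
        calc N ^ 2 * s ^ 2 ≤ N ^ 2 * (1 / N) ^ 2 := by nlinarith
          _ = 1 := by field_simp
      have ht0 : 0 ≤ N ^ 2 * s ^ 2 := by positivity
      set t := N ^ 2 * s ^ 2 with htdef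
      have hdivpos : (0 : ℝ) < N ^ 2 / N ^ p := by positivity
      constructor
      · rw [hQ2]
        have hin : 0 ≤ p * (p - 2) * (3 * t - 1) / 2 + p := by
          nlinarith [mul_nonneg (mul_nonneg (show (0:ℝ) ≤ p by linarith)
              (show (0:ℝ) ≤ 2 - p by linarith)) (show (0:ℝ) ≤ 1 - t by linarith),
            mul_nonneg (show (0:ℝ) ≤ p by linarith) (show (0:ℝ) ≤ p - 1 by linarith)]
        exact mul_nonneg hdivpos.le hin
      · rw [hQ2, hN2p]
        have hinner : p * (p - 2) * (3 * t - 1) / 2 + p ≤ 2 * p := by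
          nlinarith [sq_nonneg p, mul_nonneg (mul_nonneg (show (0:ℝ) ≤ p by linarith)
            (show (0:ℝ) ≤ 2 - p by linarith)) ht0]
        calc N ^ 2 / N ^ p * (p * (p - 2) * (3 * t - 1) / 2 + p)
            ≤ N ^ 2 / N ^ p * (2 * p) := by
              exact mul_le_mul_of_nonneg_left hinner hdivpos.le
          _ = 2 * p * (N ^ 2 / N ^ p) := by ring
  refine ⟨fun s => by rw [hd2 s]; exact hbounds s, ?_⟩
  refine convexOn_of_deriv2_nonneg convex_univ ?_ ?_ ?_ ?_
  · exact (Differentiable.continuous (fun s => (h1 s).differentiableAt)).continuousOn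
  · exact fun s _ => (h1 s).differentiableAt.differentiableWithinAt
  · intro s _
    rw [hd1]
    exact (h2 s).differentiableAt.differentiableWithinAt
  · intro s _
    have : deriv^[2] (Phi p n) s = deriv (deriv (Phi p n)) s := by
      simp [Function.iterate_succ, Function.comp]
    rw [this, hd2 s]
    exact (hbounds s).1
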